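/- Suppose a player always plays a fixed pure action c from period t_0 onward in a repeated finite two-player game, and at each period her maximal regret is nonpositive: R_{i,max}(z(t)) ≤ 0 for all t > t_0. Then t · R_{i,c}(z(t)) = t_0 · R_{i,c}(z(t_0)) for all t > t_0; consequently R_{i,c}(z(t)) → 0 and R_{i,max}(z(t)) → 0 as t → ∞, and at each period t the player plays an ε(t)-best reply to z_{-i}(t) with ε(t) = R_{i,max}(z(t)) − R_{i,c}(z(t)) → 0. -/

import Mathlib

open Finset Filter

/-- averaging lemma -/
lemma avg12 {A1 A2 : Type*} [Fintype A1] [Fintype A2] [DecidableEq A1] [DecidableEq A2]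
    (a : ℕ → A1 × A2) (t : ℕ) (zt : A1 → A2 → ℝ)
    (hzt : ∀ p q, zt p q = (1 / (t : ℝ)) * ∑ τ ∈ Finset.Icc 1 t, (if a τ = (p, q) then (1:ℝ) else 0))
    (f : A1 → A2 → ℝ) :
    ∑ p, ∑ q, zt p q * f p q = (1/(t:ℝ)) * ∑ τ ∈ Finset.Icc 1 t, f (a τ).1 (a τ).2 := by
  simp only [hzt]
  have key : ∀ p q, ((1 / (t : ℝ)) * ∑ τ ∈ Finset.Icc 1 t, (if a τ = (p, q) then (1:ℝ) else 0)) * f p q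
      = (1/(t:ℝ)) * ∑ τ ∈ Finset.Icc 1 t, (if a τ = (p,q) then f p q else 0) := by
    intro p q
    rw [mul_assoc, Finset.sum_mul]
    congr 1; apply Finset.sum_congr rfl; intro τ _
    split <;> simp
  simp only [key, ← Finset.mul_sum]
  congr 1
  calc (∑ p : A1, ∑ q : A2, ∑ τ ∈ Finset.Icc 1 t, if a τ = (p,q) then f p q else 0)
      = ∑ p : A1, ∑ τ ∈ Finset.Icc 1 t, ∑ q : A2, (if a τ = (p,q) then f p q else 0) :=
        Finset.sum_congr rfl fun p _ => Finset.sum_comm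
    _ = ∑ τ ∈ Finset.Icc 1 t, ∑ p : A1, ∑ q : A2, (if a τ = (p,q) then f p q else 0) :=
        Finset.sum_comm
    _ = ∑ τ ∈ Finset.Icc 1 t, f (a τ).1 (a τ).2 := by
        apply Finset.sum_congr rfl
        intro τ _
        have h2 := Fintype.sum_prod_type (f := fun x : A1 × A2 => if a τ = x then f x.1 x.2 else 0)
        simp only [Finset.sum_ite_eq, Finset.mem_univ, if_true] at h2
        exact h2.symm

lemma supshift12 {A : Type*} [Fintype A] [Nonempty A] (g : A → ℝ) (V : ℝ) :
    Finset.univ.sup' Finset.univ_nonempty (fun k => g k - V)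
      = Finset.univ.sup' Finset.univ_nonempty g - V := by
  apply le_antisymm
  · exact Finset.sup'_le _ _ fun k _ => sub_le_sub_right (Finset.le_sup' g (mem_univ k)) V
  · rw [sub_le_iff_le_add]
    exact Finset.sup'_le _ _ fun k _ => by
      have := Finset.le_sup' (fun k => g k - V) (mem_univ k); linarith [this]

/-- Regret of player 1 for action k at the correlated action z. -/
noncomputable def reg12 {A1 A2 : Type*} [Fintype A1] [Fintype A2]
    (u : A1 → A2 → ℝ) (z : A1 → A2 → ℝ) (k : A1) : ℝ :=
  (∑ b, (∑ a, z a b) * u k b) - ∑ a, ∑ b, z a b * u a b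

/-- if player 1 always plays the fixed action c after period t₀ and her maximal
regret is nonpositive at every period after t₀, then t·R_c(z(t)) is constant, R_c(z(t)) → 0,
R_max(z(t)) → 0, and she plays an ε(t)-best reply with ε(t) = R_max(z(t)) − R_c(z(t)) → 0. -/
theorem stmt_12 {A1 A2 : Type*} [Fintype A1] [Fintype A2] [Nonempty A1] [Nonempty A2]
    [DecidableEq A1] [DecidableEq A2]
    (u : A1 → A2 → ℝ) (a : ℕ → A1 × A2) (c : A1) (t0 : ℕ) (ht0 : 1 ≤ t0)
    (hc : ∀ τ, t0 < τ → (a τ).1 = c)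
    (z : ℕ → A1 → A2 → ℝ)
    (hz : ∀ t, 1 ≤ t → ∀ p q, z t p q
      = (1 / (t : ℝ)) * ∑ τ ∈ Finset.Icc 1 t, (if a τ = (p, q) then (1:ℝ) else 0))
    (hmax : ∀ t, t0 < t → ∀ k, reg12 u (z t) k ≤ 0) :
    (∀ t, t0 < t → (t : ℝ) * reg12 u (z t) c = (t0 : ℝ) * reg12 u (z t0) c)
    ∧ Tendsto (fun t => reg12 u (z t) c) atTop (nhds 0)
    ∧ Tendsto (fun t => Finset.univ.sup' Finset.univ_nonempty (fun k => reg12 u (z t) k))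
        atTop (nhds 0)
    ∧ ((∀ t, t0 < t →
        Finset.univ.sup' Finset.univ_nonempty (fun k => ∑ b, (∑ p, z t p b) * u k b)
          - (Finset.univ.sup' Finset.univ_nonempty (fun k => reg12 u (z t) k)
              - reg12 u (z t) c)
        ≤ ∑ b, (∑ p, z t p b) * u c b)
      ∧ Tendsto (fun t => Finset.univ.sup' Finset.univ_nonempty (fun k => reg12 u (z t) k)
          - reg12 u (z t) c) atTop (nhds 0)) := by
  -- key identity
  set S : ℕ → ℝ := fun t => ∑ τ ∈ Finset.Icc 1 t, (u c (a τ).2 - u (a τ).1 (a τ).2) with hS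
  have hkey : ∀ t : ℕ, 1 ≤ t → (t : ℝ) * reg12 u (z t) c = S t := by
    intro t ht
    have htne : (t : ℝ) ≠ 0 := by positivity
    have hA : (∑ b, (∑ p, z t p b) * u c b) = ∑ p, ∑ q, z t p q * u c q := by
      rw [Finset.sum_comm]
      exact Finset.sum_congr rfl fun b _ => Finset.sum_mul ..
    have h1 := avg12 a t (z t) (hz t ht) (fun _ q => u c q)
    have h2 := avg12 a t (z t) (hz t ht) u
    have : reg12 u (z t) c = (1/(t:ℝ)) * S t := by
      rw [reg12, hA, h1, h2, hS, ← mul_sub, ← Finset.sum_sub_distrib]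
    rw [this]
    field_simp
  -- constancy
  have hconst : ∀ t : ℕ, t0 < t → (t : ℝ) * reg12 u (z t) c = (t0 : ℝ) * reg12 u (z t0) c := by
    intro t ht
    rw [hkey t (le_trans ht0 ht.le), hkey t0 ht0]
    have hsp : S t0 + (∑ τ ∈ Finset.Ioc t0 t, (u c (a τ).2 - u (a τ).1 (a τ).2)) = S t := by
      have e : ∀ m : ℕ, Finset.Icc 1 m = Finset.Ioc 0 m := fun m => by
        rw [← Finset.Icc_add_one_left_eq_Ioc, zero_add]
      simp only [hS, e]
      exact Finset.sum_Ioc_consecutive _ (Nat.zero_le t0) ht.le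
    have hzero : (∑ τ ∈ Finset.Ioc t0 t, (u c (a τ).2 - u (a τ).1 (a τ).2)) = 0 := by
      apply Finset.sum_eq_zero
      intro τ hτ
      rw [hc τ (Finset.mem_Ioc.mp hτ).1]
      ring
    linarith [hsp, hzero]
  -- tendsto R_c
  have htne : ∀ t : ℕ, t0 < t → ((t:ℝ)) ≠ 0 := fun t ht => by
    have : 0 < t := lt_of_lt_of_le ht0 ht.le
    positivity
  have hRc : Tendsto (fun t => reg12 u (z t) c) atTop (nhds 0) := by
    apply (tendsto_const_div_atTop_nhds_zero_nat ((t0 : ℝ) * reg12 u (z t0) c)).congr'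
    filter_upwards [eventually_gt_atTop t0] with t ht
    rw [eq_comm, eq_div_iff (htne t ht), mul_comm]
    exact hconst t ht
  have hsup : Tendsto (fun t => Finset.univ.sup' Finset.univ_nonempty
      (fun k => reg12 u (z t) k)) atTop (nhds 0) := by
    apply tendsto_of_tendsto_of_tendsto_of_le_of_le' hRc tendsto_const_nhds
    · exact Eventually.of_forall fun t => Finset.le_sup' _ (mem_univ c)
    · filter_upwards [eventually_gt_atTop t0] with t ht
      exact Finset.sup'_le _ _ fun k _ => hmax t ht k
  refine ⟨hconst, hRc, hsup, ?_, by simpa using hsup.sub hRc⟩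
  intro t ht
  have hs : Finset.univ.sup' Finset.univ_nonempty (fun k => reg12 u (z t) k)
      = Finset.univ.sup' Finset.univ_nonempty (fun k => ∑ b, (∑ p, z t p b) * u k b)
        - ∑ p, ∑ q, z t p q * u p q := by
    simp only [reg12]
    exact supshift12 _ _
  rw [hs, reg12]
  ring_nf
  exact le_refl _
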